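/- Let G be a compact topological group with Haar probability measure ν, E a real Banach space, and λ : G → L(E,E) a continuous unital pseudo-representation with c(λ) < 1. Then the multiplicative average λ̄ is a unital pseudo-representation and satisfies ‖λ̄(g)‖ ≤ b(λ)/(1−c(λ)) for every g ∈ G; in particular b(λ̄) ≤ b(λ)/(1−c(λ)). -/

import Mathlib

open MeasureTheory

/-- An element with a left unit-multiple and right unit-multiple is a unit. -/
lemma isUnit_of_isUnit_mul_isUnit_mul {A : Type*} [Monoid A] {a b : A}
    (h1 : IsUnit (a * b)) (h2 : IsUnit (b * a)) : IsUnit a := by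
  obtain ⟨u, hu⟩ := h1
  obtain ⟨v, hv⟩ := h2
  have hy : a * (b * ↑u⁻¹) = 1 := by
    rw [← mul_assoc, ← hu, Units.mul_inv]
  have hx : (↑v⁻¹ * b) * a = 1 := by
    rw [mul_assoc, ← hv, Units.inv_mul]
  have hxy : (↑v⁻¹ * b : A) = b * ↑u⁻¹ := by
    calc (↑v⁻¹ * b : A) = (↑v⁻¹ * b) * (a * (b * ↑u⁻¹)) := by rw [hy, mul_one]
    _ = ((↑v⁻¹ * b) * a) * (b * ↑u⁻¹) := by simp only [mul_assoc]
    _ = b * ↑u⁻¹ := by rw [hx, one_mul]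
  exact ⟨⟨a, b * ↑u⁻¹, hy, by rw [← hxy, hx]⟩, rfl⟩

/-- The multiplicative average of a pseudo-representation `λ` of a compact group `G`
on a Banach space `E`, relative to a (Haar probability) measure `ν`:
`λ̄(g) := ∫ λ(gk) ∘ λ(k)⁻¹ dν(k)` (Bochner integral; `λ(k)⁻¹` is
`ContinuousLinearMap.inverse`, which is the genuine inverse whenever `λ(k)` is
invertible). -/
noncomputable def mulAvg {G : Type*} [Group G] [TopologicalSpace G]
    [MeasurableSpace G] {E : Type*} [NormedAddCommGroup E] [NormedSpace ℝ E]
    (ν : Measure G) (lam : G → E →L[ℝ] E) : G → E →L[ℝ] E :=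
  fun g => ∫ k, (lam (g * k)).comp (lam k).inverse ∂ν

/-- The paper's estimate (5): the multiplicative average of a continuous unital
pseudo-representation with `c(λ) < 1` is a unital pseudo-representation with
`b(λ̄) ≤ b(λ)/(1 - c(λ))`. -/
theorem mulAvg_unital_and_norm_bound
    {G : Type*} [Group G] [TopologicalSpace G] [IsTopologicalGroup G]
    [CompactSpace G] [MeasurableSpace G] [BorelSpace G]
    (ν : Measure G) [ν.IsHaarMeasure] [IsProbabilityMeasure ν]
    {E : Type*} [NormedAddCommGroup E] [NormedSpace ℝ E] [CompleteSpace E]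
    (lam : G → E →L[ℝ] E) (hcont : Continuous lam)
    (hunital : lam 1 = ContinuousLinearMap.id ℝ E)
    (B : ℝ) (hB : ∀ h : G, ‖lam h‖ ≤ B)
    (C : ℝ) (hC : ∀ g' g : G, ‖lam (g' * g) - (lam g').comp (lam g)‖ ≤ C)
    (hC1 : C < 1) :
    mulAvg ν lam 1 = ContinuousLinearMap.id ℝ E ∧
    ∀ g : G, ‖mulAvg ν lam g‖ ≤ B / (1 - C) := by
  have hone : lam 1 = (1 : E →L[ℝ] E) := hunital
  have hC0 : (0:ℝ) ≤ C := le_trans (norm_nonneg _) (hC 1 1)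
  have h1C : (0:ℝ) < 1 - C := by linarith
  -- c(λ) bound in multiplicative form
  have hCmul : ∀ g' g : G, ‖lam (g' * g) - lam g' * lam g‖ ≤ C := hC
  -- every lam k is a unit
  have hunit : ∀ k : G, IsUnit (lam k) := by
    intro k
    have haux : ∀ a b : G, a * b = 1 → IsUnit (lam a * lam b) := by
      intro a b hab
      have h : ‖(1 : E →L[ℝ] E) - lam a * lam b‖ < 1 := by
        calc ‖(1 : E →L[ℝ] E) - lam a * lam b‖ = ‖lam (a * b) - lam a * lam b‖ := by
              rw [hab, hone]
        _ ≤ C := hCmul a b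
        _ < 1 := hC1
      have := (Units.oneSub ((1 : E →L[ℝ] E) - lam a * lam b) h).isUnit
      rwa [Units.val_oneSub, sub_sub_cancel] at this
    exact isUnit_of_isUnit_mul_isUnit_mul (haux k k⁻¹ (mul_inv_cancel k))
      (haux k⁻¹ k (inv_mul_cancel k))
  -- rewrite inverse as Ring.inverse
  have hinv_eq : ∀ k : G, (lam k).inverse = Ring.inverse (lam k) := by
    intro k
    rw [ContinuousLinearMap.ringInverse_eq_inverse]
  -- key pointwise bound on Ring.inverse
  have hinv_bound : ∀ k : G, ‖Ring.inverse (lam k)‖ ≤ B / (1 - C) := by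
    intro k
    set I := Ring.inverse (lam k) with hI
    have hIk : lam k * I = 1 := Ring.mul_inverse_cancel _ (hunit k)
    have hdecomp : I = lam k⁻¹ + (lam (k⁻¹ * k) - lam k⁻¹ * lam k) * I := by
      rw [sub_mul, mul_assoc, hIk, mul_one, inv_mul_cancel, hone, one_mul]
      abel
    have : ‖I‖ ≤ B + C * ‖I‖ := by
      calc ‖I‖ = ‖lam k⁻¹ + (lam (k⁻¹ * k) - lam k⁻¹ * lam k) * I‖ := by rw [← hdecomp]
      _ ≤ ‖lam k⁻¹‖ + ‖(lam (k⁻¹ * k) - lam k⁻¹ * lam k) * I‖ := norm_add_le _ _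
      _ ≤ B + ‖lam (k⁻¹ * k) - lam k⁻¹ * lam k‖ * ‖I‖ :=
            add_le_add (hB _) (norm_mul_le _ _)
      _ ≤ B + C * ‖I‖ := by
            gcongr
            exact hCmul _ _
    rw [le_div_iff₀ h1C]
    nlinarith [norm_nonneg I]
  have hpt : ∀ g k : G, ‖lam (g * k) * Ring.inverse (lam k)‖ ≤ B / (1 - C) := by
    intro g k
    set I := Ring.inverse (lam k) with hI
    have hIk : lam k * I = 1 := Ring.mul_inverse_cancel _ (hunit k)
    have hdecomp : lam (g * k) * I = lam g + (lam (g * k) - lam g * lam k) * I := by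
      rw [sub_mul, mul_assoc, hIk, mul_one]
      abel
    calc ‖lam (g * k) * I‖ = ‖lam g + (lam (g * k) - lam g * lam k) * I‖ := by rw [hdecomp]
    _ ≤ ‖lam g‖ + ‖(lam (g * k) - lam g * lam k) * I‖ := norm_add_le _ _
    _ ≤ B + ‖lam (g * k) - lam g * lam k‖ * ‖I‖ := add_le_add (hB _) (norm_mul_le _ _)
    _ ≤ B + C * (B / (1 - C)) := by
          gcongr
          · exact hCmul _ _
          · exact hinv_bound k
    _ = B / (1 - C) := by field_simp; ring
  constructor
  · -- unital
    have : (fun k => (lam (1 * k)).comp (lam k).inverse) = fun _ : G => (1 : E →L[ℝ] E) := by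
      funext k
      rw [one_mul, hinv_eq k]
      exact Ring.mul_inverse_cancel _ (hunit k)
    rw [mulAvg, this, integral_const, measureReal_def, measure_univ, ENNReal.toReal_one, one_smul]; rfl
  · intro g
    rw [mulAvg]
    have hbound : ∀ᵐ k ∂ν, ‖(lam (g * k)).comp (lam k).inverse‖ ≤ B / (1 - C) := by
      filter_upwards with k
      rw [hinv_eq k]
      exact hpt g k
    calc ‖∫ k, (lam (g * k)).comp (lam k).inverse ∂ν‖
        ≤ (B / (1 - C)) * (ν Set.univ).toReal := norm_integral_le_of_norm_le_const hbound
    _ = B / (1 - C) := by rw [measure_univ, ENNReal.toReal_one, mul_one]
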